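/- Let p be an odd prime and r a positive integer. Then the following exact identity of rational numbers holds: Σ_{i+j+k=2p^r, i,j,k∈𝒫_p} (−1)^i/(ijk) = (1/p^r)·( Σ_{1 ≤ j < l ≤ p^r, with j, l, l−j ∈ 𝒫_p} 1/(jl) − Σ_{1 ≤ j < l ≤ 2p^r, with j, l, l−j ∈ 𝒫_p} 1/(jl) ), where the first sum is over triples of positive integers summing to 2p^r with all entries coprime to p. -/

import Mathlib

open Finset

/-- Triples of positive integers summing to `M`, all coprime to `p`. -/
private def T3 (p M : ℕ) : Finset (ℕ × ℕ × ℕ) :=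
  ((range (M+1)) ×ˢ (range (M+1)) ×ˢ (range (M+1))).filter
    (fun t => t.1 + t.2.1 + t.2.2 = M ∧ 0 < t.1 ∧ 0 < t.2.1 ∧ 0 < t.2.2 ∧
      Nat.Coprime t.1 p ∧ Nat.Coprime t.2.1 p ∧ Nat.Coprime t.2.2 p)

private lemma mem_T3 {p M : ℕ} {t : ℕ × ℕ × ℕ} :
    t ∈ T3 p M ↔ t.1 + t.2.1 + t.2.2 = M ∧ 0 < t.1 ∧ 0 < t.2.1 ∧ 0 < t.2.2 ∧
      Nat.Coprime t.1 p ∧ Nat.Coprime t.2.1 p ∧ Nat.Coprime t.2.2 p := by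
  simp only [T3, mem_filter, mem_product, mem_range]
  constructor
  · rintro ⟨-, h⟩; exact h
  · rintro h; exact ⟨⟨by omega, by omega, by omega⟩, h⟩

private lemma mem_T3' {p M a b c : ℕ} :
    (a, b, c) ∈ T3 p M ↔ a + b + c = M ∧ 0 < a ∧ 0 < b ∧ 0 < c ∧
      Nat.Coprime a p ∧ Nat.Coprime b p ∧ Nat.Coprime c p := mem_T3

/-- generic swap of 2nd and 3rd coordinates -/
private lemma T3_swap23 (p M : ℕ) (f : ℕ × ℕ × ℕ → ℚ) :
    ∑ t ∈ T3 p M, f t = ∑ t ∈ T3 p M, f (t.1, t.2.2, t.2.1) := by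
  refine Finset.sum_nbij' (fun t => (t.1, t.2.2, t.2.1)) (fun t => (t.1, t.2.2, t.2.1))
    ?_ ?_ ?_ ?_ ?_ <;>
  · intro t ht
    first
    | rfl
    | (simp only [mem_T3] at ht ⊢; refine ⟨by omega, ?_, ?_, ?_, ?_, ?_, ?_⟩ <;> tauto)

private lemma T3_swap12 (p M : ℕ) (f : ℕ × ℕ × ℕ → ℚ) :
    ∑ t ∈ T3 p M, f t = ∑ t ∈ T3 p M, f (t.2.1, t.1, t.2.2) := by
  refine Finset.sum_nbij' (fun t => (t.2.1, t.1, t.2.2)) (fun t => (t.2.1, t.1, t.2.2))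
    ?_ ?_ ?_ ?_ ?_ <;>
  · intro t ht
    first
    | rfl
    | (simp only [mem_T3] at ht ⊢; refine ⟨by omega, ?_, ?_, ?_, ?_, ?_, ?_⟩ <;> tauto)

private lemma T3_swap13 (p M : ℕ) (f : ℕ × ℕ × ℕ → ℚ) :
    ∑ t ∈ T3 p M, f t = ∑ t ∈ T3 p M, f (t.2.2, t.2.1, t.1) := by
  refine Finset.sum_nbij' (fun t => (t.2.2, t.2.1, t.1)) (fun t => (t.2.2, t.2.1, t.1))
    ?_ ?_ ?_ ?_ ?_ <;>
  · intro t ht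
    first
    | rfl
    | (simp only [mem_T3] at ht ⊢; refine ⟨by omega, ?_, ?_, ?_, ?_, ?_, ?_⟩ <;> tauto)

private lemma coprime_sub_iff {p M l : ℕ} (hp : p.Prime) (hM : p ∣ M) (hl : l ≤ M) :
    Nat.Coprime (M - l) p ↔ Nat.Coprime l p := by
  rw [Nat.coprime_comm, hp.coprime_iff_not_dvd, Nat.coprime_comm, hp.coprime_iff_not_dvd]
  constructor
  · intro h hdl; exact h (Nat.dvd_sub hM hdl)
  · intro h hdl
    have : l = M - (M - l) := by omega
    exact h (this ▸ Nat.dvd_sub hM hdl)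

/-- the pair sum equals a triple sum -/
private lemma pair_sum_eq (p M : ℕ) (hp : p.Prime) (hM : p ∣ M) :
    ∑ q ∈ (Finset.Icc 1 M ×ˢ Finset.Icc 1 M).filter
        (fun q => q.1 < q.2 ∧ Nat.Coprime q.1 p ∧ Nat.Coprime q.2 p ∧
          Nat.Coprime (q.2 - q.1) p),
      1 / ((q.1 : ℚ) * (q.2 : ℚ)) =
    ∑ t ∈ T3 p M, 1 / ((t.2.1 : ℚ) * ((t.2.1 : ℚ) + (t.2.2 : ℚ))) := by
  refine Finset.sum_nbij' (fun q => (M - q.2, q.1, q.2 - q.1)) (fun t => (t.2.1, t.2.1 + t.2.2))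
    ?_ ?_ ?_ ?_ ?_
  · rintro ⟨j, l⟩ hq
    simp only [mem_filter, mem_product, Finset.mem_Icc] at hq
    obtain ⟨⟨⟨hj1, hjM⟩, hl1, hlM⟩, hjl, hcj, hcl, hcs⟩ := hq
    have hlM' : l < M := by
      rcases lt_or_eq_of_le hlM with h | h
      · exact h
      · exfalso
        subst h
        exact (hp.coprime_iff_not_dvd.mp (Nat.coprime_comm.mp hcl)) hM
    simp only [mem_T3']
    refine ⟨by omega, by omega, by omega, by omega, ?_, hcj, hcs⟩
    rw [coprime_sub_iff hp hM (le_of_lt hlM')]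
    exact hcl
  · rintro ⟨a, b, c⟩ ht
    simp only [mem_T3'] at ht
    obtain ⟨hsum, ha, hb, hc, hca, hcb, hcc⟩ := ht
    simp only [mem_filter, mem_product, Finset.mem_Icc]
    have hba : b + c = M - a := by omega
    refine ⟨⟨⟨by omega, by omega⟩, by omega, by omega⟩, by omega, hcb, ?_, ?_⟩
    · rw [hba, coprime_sub_iff hp hM (by omega)]
      exact hca
    · simpa using hcc
  · rintro ⟨j, l⟩ hq
    simp only [mem_filter, mem_product, Finset.mem_Icc] at hq
    show ((j : ℕ), j + (l - j)) = (j, l)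
    simp only [Prod.mk.injEq]
    exact ⟨trivial, by omega⟩
  · rintro ⟨a, b, c⟩ ht
    simp only [mem_T3'] at ht
    show (M - (b + c), b, (b + c) - b) = (a, b, c)
    simp only [Prod.mk.injEq]
    exact ⟨by omega, trivial, by omega⟩
  · rintro ⟨j, l⟩ hq
    simp only [mem_filter, mem_product, Finset.mem_Icc] at hq
    have h : ((j : ℚ) + (l - j : ℕ)) = (l : ℚ) := by
      push_cast [Nat.cast_sub (le_of_lt hq.2.1)]
      ring
    show 1 / ((j : ℚ) * (l : ℚ)) = 1 / ((j : ℚ) * ((j : ℚ) + ((l - j : ℕ) : ℚ)))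
    rw [h]

/-- twice the pair sum equals the symmetric triple sum -/
private lemma two_pair_sum (p M : ℕ) (hp : p.Prime) (hM : p ∣ M) :
    2 * ∑ q ∈ (Finset.Icc 1 M ×ˢ Finset.Icc 1 M).filter
        (fun q => q.1 < q.2 ∧ Nat.Coprime q.1 p ∧ Nat.Coprime q.2 p ∧
          Nat.Coprime (q.2 - q.1) p),
      1 / ((q.1 : ℚ) * (q.2 : ℚ)) =
    ∑ t ∈ T3 p M, 1 / ((t.2.1 : ℚ) * (t.2.2 : ℚ)) := by
  rw [two_mul]
  rw [pair_sum_eq p M hp hM]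
  nth_rewrite 2 [T3_swap23 p M (fun t => 1 / ((t.2.1 : ℚ) * ((t.2.1 : ℚ) + (t.2.2 : ℚ))))]
  rw [← Finset.sum_add_distrib]
  refine Finset.sum_congr rfl ?_
  rintro ⟨a, b, c⟩ ht
  simp only [mem_T3'] at ht
  obtain ⟨-, -, hb, hc, -⟩ := ht
  have hb' : (b : ℚ) ≠ 0 := Nat.cast_ne_zero.mpr (by omega)
  have hc' : (c : ℚ) ≠ 0 := Nat.cast_ne_zero.mpr (by omega)
  have hbc : (b : ℚ) + c ≠ 0 := by positivity
  field_simp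
  ring

/-- halving bijection for all-even triples -/
private lemma even_triples (p M : ℕ) (hodd : Odd p) :
    ∑ t ∈ (T3 p (2 * M)).filter (fun t => Even t.1 ∧ Even t.2.1 ∧ Even t.2.2),
      4 / ((t.2.1 : ℚ) * (t.2.2 : ℚ)) =
    ∑ t ∈ T3 p M, 1 / ((t.2.1 : ℚ) * (t.2.2 : ℚ)) := by
  have h2 : Nat.Coprime 2 p := Nat.coprime_two_left.mpr hodd
  refine Finset.sum_nbij' (fun t => (t.1 / 2, t.2.1 / 2, t.2.2 / 2))
    (fun t => (2 * t.1, 2 * t.2.1, 2 * t.2.2)) ?_ ?_ ?_ ?_ ?_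
  · rintro ⟨a, b, c⟩ ht
    simp only [mem_filter, mem_T3'] at ht
    obtain ⟨⟨hsum, ha, hb, hc, hca, hcb, hcc⟩, hea, heb, hec⟩ := ht
    obtain ⟨a', rfl⟩ := hea.exists_two_nsmul _
    obtain ⟨b', rfl⟩ := heb.exists_two_nsmul _
    obtain ⟨c', rfl⟩ := hec.exists_two_nsmul _
    simp only [smul_eq_mul] at *
    simp only [mem_T3', Nat.mul_div_cancel_left _ (by norm_num : 0 < 2)]
    rw [Nat.coprime_mul_iff_left] at hca hcb hcc
    exact ⟨by omega, by omega, by omega, by omega, hca.2, hcb.2, hcc.2⟩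
  · rintro ⟨a, b, c⟩ ht
    simp only [mem_T3'] at ht
    obtain ⟨hsum, ha, hb, hc, hca, hcb, hcc⟩ := ht
    simp only [mem_filter, mem_T3']
    refine ⟨⟨by omega, by omega, by omega, by omega, ?_, ?_, ?_⟩, ⟨a, by ring⟩, ⟨b, by ring⟩,
      ⟨c, by ring⟩⟩ <;>
    · rw [Nat.coprime_mul_iff_left]; exact ⟨h2, by assumption⟩
  · rintro ⟨a, b, c⟩ ht
    simp only [mem_filter, mem_T3'] at ht
    obtain ⟨-, hea, heb, hec⟩ := ht
    obtain ⟨a', rfl⟩ := hea.exists_two_nsmul _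
    obtain ⟨b', rfl⟩ := heb.exists_two_nsmul _
    obtain ⟨c', rfl⟩ := hec.exists_two_nsmul _
    show (2 * (2 • a' / 2), 2 * (2 • b' / 2), 2 * (2 • c' / 2)) = (2 • a', 2 • b', 2 • c')
    simp only [smul_eq_mul, Prod.mk.injEq]
    omega
  · rintro ⟨a, b, c⟩ ht
    show (2 * a / 2, 2 * b / 2, 2 * c / 2) = (a, b, c)
    simp only [Prod.mk.injEq]
    omega
  · rintro ⟨a, b, c⟩ ht
    simp only [mem_filter, mem_T3'] at ht
    obtain ⟨⟨hsum, ha, hb, hc, -⟩, hea, heb, hec⟩ := ht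
    obtain ⟨b', rfl⟩ := heb.exists_two_nsmul _
    obtain ⟨c', rfl⟩ := hec.exists_two_nsmul _
    simp only [smul_eq_mul] at *
    have hb' : (b' : ℚ) ≠ 0 := Nat.cast_ne_zero.mpr (by omega)
    have hc' : (c' : ℚ) ≠ 0 := Nat.cast_ne_zero.mpr (by omega)
    simp only [Nat.mul_div_cancel_left _ (by norm_num : 0 < 2)]
    push_cast
    field_simp
    ring

private lemma signSumAux3 {a b c : ℕ} (h : Even (a + b + c)) :
    ((-1 : ℚ)) ^ a + (-1) ^ b + (-1) ^ c =
      -1 + (if Even a ∧ Even b ∧ Even c then (4 : ℚ) else 0) := by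
  have hmod := Nat.even_iff.mp h
  rcases Nat.even_or_odd a with ha | ha <;>
  rcases Nat.even_or_odd b with hb | hb <;>
  rcases Nat.even_or_odd c with hc | hc
  · rw [ha.neg_one_pow, hb.neg_one_pow, hc.neg_one_pow, if_pos ⟨ha, hb, hc⟩]; norm_num
  · exact absurd hmod (by rw [Nat.even_iff] at ha hb; rw [Nat.odd_iff] at hc; omega)
  · exact absurd hmod (by rw [Nat.even_iff] at ha hc; rw [Nat.odd_iff] at hb; omega)
  · rw [ha.neg_one_pow, hb.neg_one_pow, hc.neg_one_pow,
      if_neg (fun hh => (Nat.not_odd_iff_even.mpr hh.2.1) hb)]; norm_num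
  · exact absurd hmod (by rw [Nat.even_iff] at hb hc; rw [Nat.odd_iff] at ha; omega)
  · rw [ha.neg_one_pow, hb.neg_one_pow, hc.neg_one_pow,
      if_neg (fun hh => (Nat.not_odd_iff_even.mpr hh.1) ha)]; norm_num
  · rw [ha.neg_one_pow, hb.neg_one_pow, hc.neg_one_pow,
      if_neg (fun hh => (Nat.not_odd_iff_even.mpr hh.1) ha)]; norm_num
  · exact absurd hmod (by rw [Nat.odd_iff] at ha hb hc; omega)

theorem alt_three_sum_eq_pair_sums (p : ℕ) (hp : p.Prime) (hodd : Odd p)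
    (r : ℕ) (hr : 0 < r) :
    (∑ v ∈ (Finset.Nat.antidiagonalTuple 3 (2 * p ^ r)).filter
        (fun v => ∀ i, 0 < v i ∧ Nat.Coprime (v i) p),
      (-1 : ℚ) ^ (v 0) / ((v 0 : ℚ) * (v 1 : ℚ) * (v 2 : ℚ))) =
    (1 / (p : ℚ) ^ r) *
      ((∑ q ∈ (Finset.Icc 1 (p ^ r) ×ˢ Finset.Icc 1 (p ^ r)).filter
            (fun q => q.1 < q.2 ∧ Nat.Coprime q.1 p ∧ Nat.Coprime q.2 p ∧
              Nat.Coprime (q.2 - q.1) p),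
          1 / ((q.1 : ℚ) * (q.2 : ℚ))) -
       (∑ q ∈ (Finset.Icc 1 (2 * p ^ r) ×ˢ Finset.Icc 1 (2 * p ^ r)).filter
            (fun q => q.1 < q.2 ∧ Nat.Coprime q.1 p ∧ Nat.Coprime q.2 p ∧
              Nat.Coprime (q.2 - q.1) p),
          1 / ((q.1 : ℚ) * (q.2 : ℚ)))) := by
  set M := p ^ r with hMdef
  set N := 2 * M with hNdef
  have hppos : 0 < p := hp.pos
  have hMpos : 0 < M := pow_pos hppos r
  have hpM : p ∣ M := dvd_pow_self p (by omega)
  have hpN : p ∣ N := hpM.mul_left 2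
  have hMQ : (M : ℚ) ≠ 0 := Nat.cast_ne_zero.mpr (by omega)
  -- Step 1: rewrite LHS as sum over T3 p N
  have step1 :
      (∑ v ∈ (Finset.Nat.antidiagonalTuple 3 N).filter
          (fun v => ∀ i, 0 < v i ∧ Nat.Coprime (v i) p),
        (-1 : ℚ) ^ (v 0) / ((v 0 : ℚ) * (v 1 : ℚ) * (v 2 : ℚ))) =
      ∑ t ∈ T3 p N, (-1 : ℚ) ^ t.1 / ((t.1 : ℚ) * (t.2.1 : ℚ) * (t.2.2 : ℚ)) := by
    refine Finset.sum_nbij' (fun v => (v 0, v 1, v 2)) (fun t => ![t.1, t.2.1, t.2.2])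
      ?_ ?_ ?_ ?_ ?_
    · intro v hv
      simp only [mem_filter, Finset.Nat.mem_antidiagonalTuple, Fin.sum_univ_three] at hv
      rw [mem_T3]
      exact ⟨hv.1, (hv.2 0).1, (hv.2 1).1, (hv.2 2).1, (hv.2 0).2, (hv.2 1).2, (hv.2 2).2⟩
    · rintro ⟨a, b, c⟩ ht
      simp only [mem_T3'] at ht
      simp only [mem_filter, Finset.Nat.mem_antidiagonalTuple, Fin.sum_univ_three]
      refine ⟨by simpa using ht.1, ?_⟩
      intro i
      fin_cases i <;> simp <;> omega
    · intro v hv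
      funext i
      fin_cases i <;> rfl
    · rintro ⟨a, b, c⟩ ht; rfl
    · intro v hv; rfl
  rw [step1]
  -- abbreviations for the two pair sums
  set P1 := ∑ q ∈ (Finset.Icc 1 M ×ˢ Finset.Icc 1 M).filter
      (fun q => q.1 < q.2 ∧ Nat.Coprime q.1 p ∧ Nat.Coprime q.2 p ∧
        Nat.Coprime (q.2 - q.1) p),
    1 / ((q.1 : ℚ) * (q.2 : ℚ)) with hP1
  set P2 := ∑ q ∈ (Finset.Icc 1 N ×ˢ Finset.Icc 1 N).filter
      (fun q => q.1 < q.2 ∧ Nat.Coprime q.1 p ∧ Nat.Coprime q.2 p ∧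
        Nat.Coprime (q.2 - q.1) p),
    1 / ((q.1 : ℚ) * (q.2 : ℚ)) with hP2
  -- Step 2: partial fractions pointwise
  have step2 :
      ∑ t ∈ T3 p N, (-1 : ℚ) ^ t.1 / ((t.1 : ℚ) * (t.2.1 : ℚ) * (t.2.2 : ℚ)) =
      (1 / (N : ℚ)) *
        ((∑ t ∈ T3 p N, (-1 : ℚ) ^ t.1 / ((t.2.1 : ℚ) * (t.2.2 : ℚ))) +
         (∑ t ∈ T3 p N, (-1 : ℚ) ^ t.1 / ((t.1 : ℚ) * (t.2.2 : ℚ))) +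
         (∑ t ∈ T3 p N, (-1 : ℚ) ^ t.1 / ((t.1 : ℚ) * (t.2.1 : ℚ)))) := by
    rw [← Finset.sum_add_distrib, ← Finset.sum_add_distrib, Finset.mul_sum]
    refine Finset.sum_congr rfl ?_
    rintro ⟨a, b, c⟩ ht
    simp only [mem_T3'] at ht
    obtain ⟨hsum, ha, hb, hc, -⟩ := ht
    have hNa : (N : ℚ) = (a : ℚ) + b + c := by rw [← hsum]; push_cast; ring
    have ha' : (a : ℚ) ≠ 0 := Nat.cast_ne_zero.mpr (by omega)
    have hb' : (b : ℚ) ≠ 0 := Nat.cast_ne_zero.mpr (by omega)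
    have hc' : (c : ℚ) ≠ 0 := Nat.cast_ne_zero.mpr (by omega)
    have hN' : (N : ℚ) ≠ 0 := by rw [hNa]; positivity
    field_simp
    rw [hNa]
  rw [step2]
  -- Step 3: symmetrize second and third sums
  have step3a :
      (∑ t ∈ T3 p N, (-1 : ℚ) ^ t.1 / ((t.1 : ℚ) * (t.2.2 : ℚ))) =
      ∑ t ∈ T3 p N, (-1 : ℚ) ^ t.2.1 / ((t.2.1 : ℚ) * (t.2.2 : ℚ)) := by
    exact T3_swap12 p N (fun t => (-1 : ℚ) ^ t.1 / ((t.1 : ℚ) * (t.2.2 : ℚ)))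
  have step3b :
      (∑ t ∈ T3 p N, (-1 : ℚ) ^ t.1 / ((t.1 : ℚ) * (t.2.1 : ℚ))) =
      ∑ t ∈ T3 p N, (-1 : ℚ) ^ t.2.2 / ((t.2.1 : ℚ) * (t.2.2 : ℚ)) := by
    rw [T3_swap13 p N (fun t => (-1 : ℚ) ^ t.1 / ((t.1 : ℚ) * (t.2.1 : ℚ)))]
    refine Finset.sum_congr rfl ?_
    rintro ⟨a, b, c⟩ -
    show (-1 : ℚ) ^ c / ((c : ℚ) * (b : ℚ)) = (-1 : ℚ) ^ c / ((b : ℚ) * (c : ℚ))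
    rw [mul_comm (c : ℚ)]
  rw [step3a, step3b]
  -- Step 4: combine the signs
  have step4 :
      (∑ t ∈ T3 p N, (-1 : ℚ) ^ t.1 / ((t.2.1 : ℚ) * (t.2.2 : ℚ))) +
      (∑ t ∈ T3 p N, (-1 : ℚ) ^ t.2.1 / ((t.2.1 : ℚ) * (t.2.2 : ℚ))) +
      (∑ t ∈ T3 p N, (-1 : ℚ) ^ t.2.2 / ((t.2.1 : ℚ) * (t.2.2 : ℚ))) =
      -(∑ t ∈ T3 p N, 1 / ((t.2.1 : ℚ) * (t.2.2 : ℚ))) +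
      ∑ t ∈ (T3 p N).filter (fun t => Even t.1 ∧ Even t.2.1 ∧ Even t.2.2),
        4 / ((t.2.1 : ℚ) * (t.2.2 : ℚ)) := by
    rw [← Finset.sum_add_distrib, ← Finset.sum_add_distrib, ← Finset.sum_neg_distrib,
      Finset.sum_filter, ← Finset.sum_add_distrib]
    refine Finset.sum_congr rfl ?_
    rintro ⟨a, b, c⟩ ht
    simp only [mem_T3'] at ht
    have heven : Even (a + b + c) := by
      rw [ht.1]; exact ⟨M, by omega⟩
    have hss := signSumAux3 heven
    rw [← add_div, ← add_div, hss]
    by_cases h : Even a ∧ Even b ∧ Even c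
    · rw [if_pos h, if_pos h]; ring
    · rw [if_neg h, if_neg h]; ring
  rw [step4]
  -- Step 5: even triples halve
  rw [even_triples p M hodd]
  -- Step 6: triple sums are twice pair sums
  have h1 := two_pair_sum p M hp hpM
  have h2 := two_pair_sum p N hp hpN
  rw [← hP1] at h1
  rw [← hP2] at h2
  rw [← h1, ← h2]
  have hNQ : (N : ℚ) = 2 * (M : ℚ) := by push_cast [hNdef]; ring
  rw [hNQ]
  have : ((p : ℚ)) ^ r = (M : ℚ) := by push_cast [hMdef]; ring
  rw [this]
  field_simp
  ring
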